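/- Let p ∈ [0, 1] and let (B^t)_{t≥0} be a sequence of integer-valued random variables adapted to a filtration such that B^t ≤ B^{t−1} + 1 almost surely and P(B^t ≤ B^{t−1} | B^0, …, B^{t−1}) ≥ 1 − p for all t ≥ 1. Then for every t ≥ 1/p, with probability at least 1 − e^{−1}, it holds that B^t ≤ B^0 + e·p·t. -/

import Mathlib

open MeasureTheory

theorem stmt_5 {Ω : Type*} [m0 : MeasurableSpace Ω] (μ : Measure Ω) [IsProbabilityMeasure μ]
    (p : ℝ) (hp0 : 0 ≤ p) (hp1 : p ≤ 1)
    (B : ℕ → Ω → ℤ) (ℱ : Filtration ℕ m0)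
    (hadapted : Adapted ℱ B)
    (hstep : ∀ t : ℕ, 1 ≤ t → ∀ᵐ ω ∂μ, B t ω ≤ B (t - 1) ω + 1)
    (hcond : ∀ t : ℕ, 1 ≤ t →
      (fun _ => (1 - p)) ≤ᵐ[μ]
        μ[({ω | B t ω ≤ B (t - 1) ω}).indicator (fun _ => (1 : ℝ)) | ℱ (t - 1)])
    (t : ℕ) (ht : 1 / p ≤ (t : ℝ)) :
    1 - Real.exp (-1) ≤
      (μ {ω | (B t ω : ℝ) ≤ (B 0 ω : ℝ) + Real.exp 1 * p * t}).toReal := by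
  have hBmeas : ∀ s, Measurable (B s) :=
    fun s => (hadapted s).mono (ℱ.le s) le_rfl
  have hBRmeas : ∀ s, Measurable (fun ω => (B s ω : ℝ)) :=
    fun s => measurable_from_top.comp (hBmeas s)
  have hS : ∀ s : ℕ, MeasurableSet {ω | B (s+1) ω ≤ B s ω} := by
    intro s
    exact measurableSet_le (hBmeas _) (hBmeas _)
  -- the target event is measurable
  have hA : MeasurableSet {ω | (B t ω : ℝ) ≤ (B 0 ω : ℝ) + Real.exp 1 * p * t} :=
    measurableSet_le (hBRmeas t) ((hBRmeas 0).add_const _)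
  -- probability of an up-step is at most p
  have hprob : ∀ s : ℕ, (μ {ω | B (s+1) ω ≤ B s ω}ᶜ).toReal ≤ p := by
    intro s
    have h := hcond (s+1) (by omega)
    simp only [Nat.add_sub_cancel] at h
    have hint : Integrable (({ω | B (s+1) ω ≤ B s ω}).indicator (fun _ => (1:ℝ))) μ :=
      (integrable_const 1).indicator (hS s)
    have h1 : (1 - p) ≤ ∫ ω, ({ω | B (s+1) ω ≤ B s ω}).indicator (fun _ => (1:ℝ)) ω ∂μ := by
      calc (1 - p) = ∫ _, (1 - p) ∂μ := by simp
        _ ≤ ∫ ω, (μ[({ω | B (s+1) ω ≤ B s ω}).indicator (fun _ => (1:ℝ)) | ℱ s]) ω ∂μ :=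
          integral_mono_ae (integrable_const _) integrable_condExp h
        _ = _ := integral_condExp (ℱ.le s)
    rw [integral_indicator_const _ (hS s)] at h1
    have hcompl : (μ {ω | B (s+1) ω ≤ B s ω}ᶜ).toReal
        = 1 - (μ {ω | B (s+1) ω ≤ B s ω}).toReal := by
      rw [prob_compl_eq_one_sub (hS s), ENNReal.toReal_sub_of_le prob_le_one (by norm_num)]
      simp
    simp only [smul_eq_mul, mul_one] at h1
    linarith [hcompl, measureReal_def μ {ω | B (s+1) ω ≤ B s ω}]
  -- the running count of up-steps
  set g : ℕ → Ω → ℝ :=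
    fun s => Set.indicator ({ω | B (s+1) ω ≤ B s ω}ᶜ) (fun _ => (1:ℝ)) with hg
  set f : Ω → ℝ := fun ω => ∑ s ∈ Finset.range t, g s ω with hf
  have hgint : ∀ s, Integrable (g s) μ :=
    fun s => (integrable_const 1).indicator (hS s).compl
  have hfint : Integrable f μ := integrable_finset_sum _ fun s _ => hgint s
  have hfnonneg : 0 ≤ᵐ[μ] f := by
    refine Filter.Eventually.of_forall fun ω => ?_
    exact Finset.sum_nonneg fun s _ => Set.indicator_nonneg (fun _ _ => zero_le_one) ω
  have hfint_le : ∫ ω, f ω ∂μ ≤ p * t := by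
    rw [hf, integral_finset_sum _ fun s _ => hgint s]
    calc ∑ s ∈ Finset.range t, ∫ ω, g s ω ∂μ ≤ ∑ s ∈ Finset.range t, p := by
          refine Finset.sum_le_sum fun s _ => ?_
          rw [hg]
          rw [integral_indicator_const _ (hS s).compl]
          simpa [measureReal_def] using hprob s
      _ = p * t := by simp [mul_comm]
  -- a.e., B t - B 0 is at most the count of up-steps
  have hstep' : ∀ᵐ ω ∂μ, ∀ s : ℕ, B (s+1) ω ≤ B s ω + 1 := by
    rw [ae_all_iff]
    intro s
    simpa using hstep (s+1) (by omega)
  have hle : ∀ᵐ ω ∂μ, (B t ω : ℝ) - (B 0 ω : ℝ) ≤ f ω := by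
    filter_upwards [hstep'] with ω hω
    have hsum : (B t ω : ℝ) - (B 0 ω : ℝ)
        = ∑ s ∈ Finset.range t, ((B (s+1) ω : ℝ) - (B s ω : ℝ)) :=
      (Finset.sum_range_sub (fun s => (B s ω : ℝ)) t).symm
    rw [hsum, hf]
    refine Finset.sum_le_sum fun s _ => ?_
    by_cases hc : B (s+1) ω ≤ B s ω
    · have : g s ω = 0 := by
        rw [hg]; exact Set.indicator_of_notMem (by simpa using hc) _
      rw [this]
      have : (B (s+1) ω : ℝ) ≤ (B s ω : ℝ) := by exact_mod_cast hc
      linarith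
    · have : g s ω = 1 := by
        rw [hg]; exact Set.indicator_of_mem (by simpa using hc) _
      rw [this]
      have : (B (s+1) ω : ℝ) ≤ (B s ω : ℝ) + 1 := by exact_mod_cast hω s
      linarith
  by_cases hpt : p = 0 ∨ t = 0
  · -- degenerate case : the event holds a.e.
    have hev : ∀ᵐ ω ∂μ, (B t ω : ℝ) ≤ (B 0 ω : ℝ) + Real.exp 1 * p * t := by
      rcases hpt with hp | ht0
      · -- p = 0 : no up-steps a.e.
        have hnostep : ∀ᵐ ω ∂μ, ∀ s : ℕ, B (s+1) ω ≤ B s ω := by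
          rw [ae_all_iff]
          intro s
          have : μ {ω | B (s+1) ω ≤ B s ω}ᶜ = 0 := by
            have := hprob s
            rw [hp] at this
            have hne : μ {ω | B (s+1) ω ≤ B s ω}ᶜ ≠ ⊤ := measure_ne_top _ _
            have := (ENNReal.toReal_eq_zero_iff _).mp (le_antisymm this
              ENNReal.toReal_nonneg)
            tauto
          exact ae_iff.mpr this
        filter_upwards [hnostep] with ω hω
        have hmono : ∀ s : ℕ, B s ω ≤ B 0 ω := by
          intro s
          induction s with
          | zero => exact le_refl _
          | succ n ih => exact (hω n).trans ih
        have : (B t ω : ℝ) ≤ (B 0 ω : ℝ) := by exact_mod_cast hmono t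
        rw [hp]; simpa using this
      · subst ht0
        refine Filter.Eventually.of_forall fun ω => ?_
        have : 0 ≤ Real.exp 1 * p * (0:ℕ) := by positivity
        push_cast
        linarith
    have : (μ {ω | (B t ω : ℝ) ≤ (B 0 ω : ℝ) + Real.exp 1 * p * t}).toReal = 1 := by
      rw [ae_iff] at hev
      have : μ {ω | (B t ω : ℝ) ≤ (B 0 ω : ℝ) + Real.exp 1 * p * t}ᶜ = 0 := hev
      rw [prob_compl_eq_zero_iff hA] at this
      rw [this, ENNReal.toReal_one]
    rw [this]
    have : 0 < Real.exp (-1) := Real.exp_pos _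
    linarith
  · push_neg at hpt
    obtain ⟨hp, ht0⟩ := hpt
    have hppos : 0 < p := lt_of_le_of_ne hp0 (Ne.symm hp)
    have htpos : (0:ℝ) < t := by
      have : t ≠ 0 := ht0
      positivity
    have hεpos : 0 < Real.exp 1 * p * t := by positivity
    -- Markov's inequality
    have hmarkov : Real.exp 1 * p * t *
        (μ {ω | Real.exp 1 * p * t ≤ f ω}).toReal ≤ ∫ ω, f ω ∂μ :=
      mul_meas_ge_le_integral_of_nonneg hfnonneg hfint _
    have hbad : (μ {ω | Real.exp 1 * p * t ≤ f ω}).toReal ≤ Real.exp (-1) := by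
      rw [Real.exp_neg, ← one_div, le_div_iff₀ (Real.exp_pos 1)]
      calc (μ {ω | Real.exp 1 * p * t ≤ f ω}).toReal * Real.exp 1
          = (Real.exp 1 * p * t * (μ {ω | Real.exp 1 * p * t ≤ f ω}).toReal) / (p * t) := by
            field_simp
        _ ≤ (p * t) / (p * t) := by
            apply div_le_div_of_nonneg_right _ (by positivity)
            exact hmarkov.trans hfint_le
        _ = 1 := div_self (by positivity)
    -- the complement of the event is a.e. contained in the Markov bad set
    have hsub : μ {ω | (B t ω : ℝ) ≤ (B 0 ω : ℝ) + Real.exp 1 * p * t}ᶜ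
        ≤ μ {ω | Real.exp 1 * p * t ≤ f ω} := by
      apply measure_mono_ae
      filter_upwards [hle] with ω hω
      intro hmem
      have hmem' : (B 0 ω : ℝ) + Real.exp 1 * p * ↑t < (B t ω : ℝ) := not_le.mp hmem
      show Real.exp 1 * p * ↑t ≤ f ω
      linarith
    have hcompl_le : (μ {ω | (B t ω : ℝ) ≤ (B 0 ω : ℝ) + Real.exp 1 * p * t}ᶜ).toReal
        ≤ Real.exp (-1) :=
      le_trans (ENNReal.toReal_mono (measure_ne_top _ _) hsub) hbad
    have heq : (μ {ω | (B t ω : ℝ) ≤ (B 0 ω : ℝ) + Real.exp 1 * p * t}ᶜ).toReal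
        = 1 - (μ {ω | (B t ω : ℝ) ≤ (B 0 ω : ℝ) + Real.exp 1 * p * t}).toReal := by
      rw [prob_compl_eq_one_sub hA, ENNReal.toReal_sub_of_le prob_le_one (by norm_num)]
      simp
    linarith
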